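/- One has ∫₀^{X} u(x)² dx ≤ (2 / sinh²(X/2)) · ∫₀^{X} u(x)² · sinh²(x) dx. -/

import Mathlib

/-- For a radial Mathieu function `u` with `−u'' + (b − h² cosh²)u = 0` on `[0,X]`,
`b − h² cosh²(X) ≥ 1/2`, and Dirichlet or Neumann condition at `0`:
`∫₀^X u² ≤ (2/sinh²(X/2)) ∫₀^X u² sinh²`. -/
theorem mathieu_sinh_weight_estimate
    (X : ℝ) (hX : 0 < X) (h b : ℝ)
    (u u' u'' : ℝ → ℝ)
    (hu' : ∀ x ∈ Set.Icc (0:ℝ) X, HasDerivWithinAt u (u' x) (Set.Icc 0 X) x)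
    (hu'' : ∀ x ∈ Set.Icc (0:ℝ) X, HasDerivWithinAt u' (u'' x) (Set.Icc 0 X) x)
    (hu''cont : ContinuousOn u'' (Set.Icc 0 X))
    (hode : ∀ x ∈ Set.Icc (0:ℝ) X,
      -u'' x + (b - h ^ 2 * Real.cosh x ^ 2) * u x = 0)
    (hgap : b - h ^ 2 * Real.cosh X ^ 2 ≥ 1/2)
    (hbc : u 0 = 0 ∨ u' 0 = 0) :
    (∫ x in (0:ℝ)..X, u x ^ 2)
      ≤ (2 / Real.sinh (X/2) ^ 2) * ∫ x in (0:ℝ)..X, u x ^ 2 * Real.sinh x ^ 2 := by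
  have h0X : (0:ℝ) ∈ Set.Icc (0:ℝ) X := ⟨le_refl 0, hX.le⟩
  -- the potential is nonnegative on [0,X]
  have hqpos : ∀ x ∈ Set.Icc (0:ℝ) X, 0 ≤ b - h ^ 2 * Real.cosh x ^ 2 := by
    intro x hx
    have hc : Real.cosh x ≤ Real.cosh X := by
      rw [Real.cosh_le_cosh, abs_of_nonneg hx.1, abs_of_nonneg hX.le]
      exact hx.2
    have hc0 : 0 < Real.cosh x := Real.cosh_pos x
    have hcc : Real.cosh x ^ 2 ≤ Real.cosh X ^ 2 := by nlinarith
    nlinarith [mul_nonneg (sq_nonneg h) (sub_nonneg.mpr hcc)]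
  -- continuity of u and u'
  have hucont : ContinuousOn u (Set.Icc 0 X) :=
    fun x hx => (hu' x hx).continuousWithinAt
  have hu'cont : ContinuousOn u' (Set.Icc 0 X) :=
    fun x hx => (hu'' x hx).continuousWithinAt
  -- g = u * u' is monotone on [0,X]
  set g : ℝ → ℝ := fun x => u x * u' x with hgdef
  have hg' : ∀ x ∈ Set.Icc (0:ℝ) X,
      HasDerivWithinAt g (u' x * u' x + u x * u'' x) (Set.Icc 0 X) x :=
    fun x hx => (hu' x hx).mul (hu'' x hx)
  have hgmono : MonotoneOn g (Set.Icc 0 X) := by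
    apply monotoneOn_of_deriv_nonneg (convex_Icc 0 X)
      (hucont.mul hu'cont)
    · intro x hx
      rw [interior_Icc] at hx
      have hx' : x ∈ Set.Icc (0:ℝ) X := Set.mem_Icc_of_Ioo hx
      exact ((hg' x hx').hasDerivAt (Icc_mem_nhds hx.1 hx.2)).differentiableAt.differentiableWithinAt
    · intro x hx
      rw [interior_Icc] at hx
      have hx' : x ∈ Set.Icc (0:ℝ) X := Set.mem_Icc_of_Ioo hx
      have hd := (hg' x hx').hasDerivAt (Icc_mem_nhds hx.1 hx.2)
      rw [show u * u' = g from rfl, hd.deriv]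
      have hq := hqpos x hx'
      have ho := hode x hx'
      have h2 : u'' x = (b - h ^ 2 * Real.cosh x ^ 2) * u x := by linarith
      rw [h2]
      nlinarith [mul_nonneg hq (sq_nonneg (u x)), mul_self_nonneg (u' x)]
  have hg0 : g 0 = 0 := by
    rcases hbc with h1 | h1 <;> simp [hgdef, h1]
  have hgnn : ∀ x ∈ Set.Icc (0:ℝ) X, 0 ≤ g x := by
    intro x hx
    have := hgmono h0X hx hx.1
    linarith [hg0 ▸ this]
  -- f = u^2 is monotone on [0,X]
  set f : ℝ → ℝ := fun x => u x ^ 2 with hfdef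
  have hf' : ∀ x ∈ Set.Icc (0:ℝ) X,
      HasDerivWithinAt f (2 * g x) (Set.Icc 0 X) x := by
    intro x hx
    have : HasDerivWithinAt f _ (Set.Icc 0 X) x := ((hu' x hx).pow 2)
    simpa [hgdef, mul_comm, mul_assoc, mul_left_comm] using this
  have hfcont : ContinuousOn f (Set.Icc 0 X) := hucont.pow 2
  have hfmono : MonotoneOn f (Set.Icc 0 X) := by
    apply monotoneOn_of_deriv_nonneg (convex_Icc 0 X) hfcont
    · intro x hx
      rw [interior_Icc] at hx
      have hx' : x ∈ Set.Icc (0:ℝ) X := Set.mem_Icc_of_Ioo hx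
      exact ((hf' x hx').hasDerivAt (Icc_mem_nhds hx.1 hx.2)).differentiableAt.differentiableWithinAt
    · intro x hx
      rw [interior_Icc] at hx
      have hx' : x ∈ Set.Icc (0:ℝ) X := Set.mem_Icc_of_Ioo hx
      rw [((hf' x hx').hasDerivAt (Icc_mem_nhds hx.1 hx.2)).deriv]
      linarith [hgnn x hx']
  -- setup for the integral estimates
  set s := Real.sinh (X/2) with hsdef
  have hs : 0 < s := by
    rw [hsdef, ← Real.sinh_zero]
    rw [Real.sinh_lt_sinh]
    linarith
  have hs2 : 0 < s ^ 2 := by positivity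
  have hhalf : (0:ℝ) ≤ X/2 := by linarith
  have hhalfX : X/2 ≤ X := by linarith
  have hsub1 : Set.uIcc (0:ℝ) (X/2) ⊆ Set.Icc 0 X := by
    rw [Set.uIcc_of_le hhalf]; exact Set.Icc_subset_Icc le_rfl hhalfX
  have hsub2 : Set.uIcc (X/2) X ⊆ Set.Icc 0 X := by
    rw [Set.uIcc_of_le hhalfX]; exact Set.Icc_subset_Icc hhalf le_rfl
  have hsub3 : Set.uIcc (0:ℝ) X ⊆ Set.Icc 0 X := by
    rw [Set.uIcc_of_le hX.le]
  -- integrability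
  have hint1 : IntervalIntegrable f MeasureTheory.volume 0 (X/2) :=
    (hfcont.mono hsub1).intervalIntegrable
  have hint2 : IntervalIntegrable f MeasureTheory.volume (X/2) X :=
    (hfcont.mono hsub2).intervalIntegrable
  have hwcont : ContinuousOn (fun x => f x * Real.sinh x ^ 2) (Set.Icc 0 X) :=
    hfcont.mul ((Real.continuous_sinh.continuousOn).pow 2)
  have hwint1 : IntervalIntegrable (fun x => f x * Real.sinh x ^ 2)
      MeasureTheory.volume 0 (X/2) := (hwcont.mono hsub1).intervalIntegrable
  have hwint2 : IntervalIntegrable (fun x => f x * Real.sinh x ^ 2)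
      MeasureTheory.volume (X/2) X := (hwcont.mono hsub2).intervalIntegrable
  have hintshift : IntervalIntegrable (fun x => f (x + X/2))
      MeasureTheory.volume 0 (X/2) := by
    apply ContinuousOn.intervalIntegrable
    apply hfcont.comp (Continuous.continuousOn (by continuity))
    intro x hx
    rw [Set.uIcc_of_le hhalf] at hx
    exact ⟨by linarith [hx.1], by linarith [hx.2]⟩
  -- Step B : ∫₀^{X/2} f ≤ ∫_{X/2}^X f
  have hB : (∫ x in (0:ℝ)..(X/2), f x) ≤ ∫ x in (X/2)..X, f x := by
    have hle : (∫ x in (0:ℝ)..(X/2), f x) ≤ ∫ x in (0:ℝ)..(X/2), f (x + X/2) := by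
      apply intervalIntegral.integral_mono_on hhalf hint1 hintshift
      intro x hx
      apply hfmono ⟨hx.1, le_trans hx.2 hhalfX⟩
        ⟨by linarith [hx.1], by linarith [hx.2]⟩
      linarith
    have heq : (∫ x in (0:ℝ)..(X/2), f (x + X/2)) = ∫ x in (X/2)..X, f x := by
      rw [intervalIntegral.integral_comp_add_right f (X/2)]
      norm_num
    linarith [heq ▸ hle]
  -- Step C : s² ∫_{X/2}^X f ≤ ∫_{X/2}^X f sinh²
  have hC : s ^ 2 * (∫ x in (X/2)..X, f x) ≤ ∫ x in (X/2)..X, f x * Real.sinh x ^ 2 := by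
    rw [← intervalIntegral.integral_const_mul]
    apply intervalIntegral.integral_mono_on hhalfX
      (hint2.const_mul _) hwint2
    intro x hx
    have hsx : s ≤ Real.sinh x := Real.sinh_le_sinh.mpr hx.1
    have hfnn : 0 ≤ f x := sq_nonneg _
    have hss : s ^ 2 ≤ Real.sinh x ^ 2 := by nlinarith
    nlinarith [mul_le_mul_of_nonneg_left hss hfnn]
  -- Step D : ∫₀^{X/2} f sinh² ≥ 0
  have hD : 0 ≤ ∫ x in (0:ℝ)..(X/2), f x * Real.sinh x ^ 2 := by
    apply intervalIntegral.integral_nonneg hhalf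
    intro x hx
    have hx0 : (0:ℝ) ≤ x := hx.1
    have : 0 ≤ Real.sinh x := by
      rw [← Real.sinh_zero]; exact Real.sinh_le_sinh.mpr hx0
    positivity
  -- splittings
  have hsplit : (∫ x in (0:ℝ)..(X/2), f x) + (∫ x in (X/2)..X, f x)
      = ∫ x in (0:ℝ)..X, f x :=
    intervalIntegral.integral_add_adjacent_intervals hint1 hint2
  have hwsplit : (∫ x in (0:ℝ)..(X/2), f x * Real.sinh x ^ 2)
      + (∫ x in (X/2)..X, f x * Real.sinh x ^ 2)
      = ∫ x in (0:ℝ)..X, f x * Real.sinh x ^ 2 :=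
    intervalIntegral.integral_add_adjacent_intervals hwint1 hwint2
  -- conclusion
  show (∫ x in (0:ℝ)..X, f x) ≤ (2 / s ^ 2) * ∫ x in (0:ℝ)..X, f x * Real.sinh x ^ 2
  rw [div_mul_eq_mul_div, le_div_iff₀ hs2]
  nlinarith [hB, hC, hD, hsplit, hwsplit,
    mul_le_mul_of_nonneg_left hB hs2.le]
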